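/- arXiv:1905.01368 — 2 statements merged into one kernel-verified Lean document; each statement's English description precedes it below -/
import Mathlib

section
/- Let α, λ be real with α + λ < 0 and α > 0. Then for every dt > 0, both characteristic roots ρ±(dt) of the SBDF2 scheme applied to u' = αu + λu have modulus strictly less than 1; i.e., the scheme is unconditionally stable. -/
/-- Case `α + λ < 0` and `α > 0`: for every `dt > 0`, every (possibly complex) root of the
SBDF2 characteristic polynomial has modulus strictly less than 1 (unconditional stability). -/
theorem stmt7 (a lam : ℝ) (h : a + lam < 0) (ha : 0 < a) :
    ∀ dt : ℝ, 0 < dt → ∀ z : ℂ,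
      ((3/2 - lam*dt : ℝ) : ℂ)*z^2 - ((2 + 2*a*dt : ℝ) : ℂ)*z + ((1/2 + a*dt : ℝ) : ℂ) = 0 →
      ‖z‖ < 1 := by
  intro dt hdt z hz
  set A : ℝ := 3/2 - lam*dt with hAdef
  set B : ℝ := 2 + 2*a*dt with hBdef
  set C : ℝ := 1/2 + a*dt with hCdef
  have hlam : lam < 0 := by linarith
  have hA : 0 < A := by
    have : 0 < -lam * dt := mul_pos (by linarith) hdt
    simp only [hAdef]; nlinarith
  have hC : 0 < C := by simp only [hCdef]; nlinarith
  have hCA : C < A := by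
    have : (a + lam) * dt < 0 := mul_neg_of_neg_of_pos h hdt
    simp only [hAdef, hCdef]; nlinarith
  by_cases hc : (starRingEnd ℂ) z = z
  · -- z is real
    have him : z.im = 0 := by
      have := Complex.conj_eq_iff_im.mp hc
      exact this
    set x : ℝ := z.re with hxdef
    have hzx : z = (x : ℂ) := by
      rw [hxdef]
      exact (Complex.conj_eq_iff_re.mp hc).symm
    rw [hzx] at hz
    have hreal : A*x^2 - B*x + C = 0 := by
      have : ((A*x^2 - B*x + C : ℝ) : ℂ) = 0 := by push_cast; linear_combination hz
      exact_mod_cast this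
    rw [hzx, Complex.norm_real, Real.norm_eq_abs]
    rw [abs_lt]
    constructor
    · -- x > -1 : indeed x > 0 since A,B,C > 0
      by_contra hx
      push_neg at hx
      have hB : 0 < B := by simp only [hBdef]; nlinarith
      nlinarith [sq_nonneg x]
    · -- x < 1
      by_contra hx
      push_neg at hx
      have h2AB : B < 2*A := by
        have : (a + lam) * dt < 0 := mul_neg_of_neg_of_pos h hdt
        simp only [hAdef, hBdef]; nlinarith
      have hABC : 0 < A - B + C := by
        have : (a + lam) * dt < 0 := mul_neg_of_neg_of_pos h hdt
        simp only [hAdef, hBdef, hCdef]; nlinarith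
      nlinarith [sq_nonneg (x - 1)]
  · -- z is not real: conj z is also a root
    set w : ℂ := (starRingEnd ℂ) z with hwdef
    have hz' : ((A : ℂ))*w^2 - ((B : ℂ))*w + ((C : ℂ)) = 0 := by
      have := congrArg (starRingEnd ℂ) hz
      simpa [map_sub, map_add, map_mul, map_pow, Complex.conj_ofReal] using this
    have hfac : (z - w) * ((A : ℂ)*(z + w) - (B : ℂ)) = 0 := by
      linear_combination hz - hz'
    have hzw : z - w ≠ 0 := by
      intro hzero
      exact hc (sub_eq_zero.mp hzero).symm
    have hsum : (A : ℂ)*(z + w) - (B : ℂ) = 0 := by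
      rcases mul_eq_zero.mp hfac with h1 | h1
      · exact absurd h1 hzw
      · exact h1
    have hprod : (A : ℂ) * (z * w) = (C : ℂ) := by
      linear_combination z * hsum - hz
    have hns : (A : ℂ) * ((Complex.normSq z : ℝ) : ℂ) = (C : ℂ) := by
      rw [← Complex.mul_conj]; exact hprod
    have hnsr : A * Complex.normSq z = C := by exact_mod_cast hns
    have hlt : Complex.normSq z < 1 := by
      rcases lt_or_ge (Complex.normSq z) 1 with h1 | h1
      · exact h1
      · nlinarith
    have habs : ‖z‖^2 = Complex.normSq z := Complex.sq_norm z
    nlinarith [norm_nonneg z]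
end

section
/- For the SBDF2 scheme applied to u' = (λ+α)u (λ implicit, α explicit) with α + λ < 0, the steady state 0 is an asymptotically stable fixed point of the associated two-dimensional discrete dynamical system U^{n+1} = F(U^n), U^n = (u^{n-1}, u^n), whenever both characteristic roots ρ±(dt) have modulus strictly less than 1; in particular, for α > 0 this holds for every dt > 0, and for α < 0, 3α < λ it holds exactly when 0 < dt < 4/(λ - 3α) (restricted to dt < 3/(2λ) when λ > 0). -/
open Filter

/-- The two-dimensional discrete dynamical map encoding the SBDF2 recurrence for
`u' = αu + λu` (α explicit, λ implicit). -/
noncomputable def sbdf2Map (a lam dt : ℝ) : ℝ × ℝ → ℝ × ℝ :=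
  fun p => (p.2, (3/2 - lam*dt)⁻¹ * (2*p.2 + 2*dt*a*p.2 - (1/2)*p.1 - dt*a*p.1))

/-- `(0,0)` is asymptotically stable: every orbit converges to it. -/
noncomputable def sbdf2AsympStable (a lam dt : ℝ) : Prop :=
  ∀ x : ℝ × ℝ, Tendsto (fun n : ℕ => (sbdf2Map a lam dt)^[n] x) atTop (nhds (0, 0))

lemma nat_mul_pow_tendsto {t : ℝ} (h0 : 0 ≤ t) (h1 : t < 1) :
    Tendsto (fun n : ℕ => (n : ℝ) * t ^ n) atTop (nhds 0) := by
  have := summable_norm_pow_mul_geometric_of_norm_lt_one 1 (r := t)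
    (by rwa [Real.norm_eq_abs, abs_of_nonneg h0])
  have h2 := this.tendsto_atTop_zero
  simpa [Real.norm_eq_abs, abs_of_nonneg h0, abs_of_nonneg, abs_mul, abs_pow] using
    (tendsto_zero_iff_norm_tendsto_zero.mpr (by simpa using h2) : _)

lemma rec_tendsto (r s : ℂ) (hr : ‖r‖ < 1) (hs : ‖s‖ < 1) (u : ℕ → ℂ)
    (hrec : ∀ n, u (n+2) = (r+s) * u (n+1) - r*s * u n) :
    Tendsto u atTop (nhds 0) := by
  set t : ℝ := max ‖r‖ ‖s‖ with ht
  have ht0 : 0 ≤ t := le_trans (norm_nonneg r) (le_max_left _ _)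
  have ht1 : t < 1 := max_lt hr hs
  have htr : ‖r‖ ≤ t := le_max_left _ _
  have hts : ‖s‖ ≤ t := le_max_right _ _
  have hv : ∀ n, u (n+1) - r * u n = s ^ n * (u 1 - r * u 0) := by
    intro n
    induction n with
    | zero => simp
    | succ n ih =>
      have h2 : u (n+2) - r * u (n+1) = s * (u (n+1) - r * u n) := by
        rw [hrec n]; ring
      rw [h2, ih]; ring
  set M : ℝ := ‖u 1 - r * u 0‖ with hM
  have hM0 : 0 ≤ M := norm_nonneg _
  have hu0 : 0 ≤ ‖u 0‖ := norm_nonneg _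
  have key : ∀ n, ‖u (n+1)‖ ≤ t ^ (n+1) * ‖u 0‖ + ((n:ℝ)+1) * t ^ n * M := by
    intro n
    induction n with
    | zero =>
      have hc : ‖u 1‖ ≤ ‖r‖ * ‖u 0‖ + M := by
        calc ‖u 1‖ = ‖r * u 0 + (u 1 - r * u 0)‖ := by rw [add_sub_cancel]
          _ ≤ ‖r * u 0‖ + ‖u 1 - r * u 0‖ := norm_add_le _ _
          _ = ‖r‖ * ‖u 0‖ + M := by rw [norm_mul]
      push_cast
      simp only [pow_one, pow_zero]
      nlinarith [mul_le_mul_of_nonneg_right htr hu0]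
    | succ n ih =>
      have h1 : u (n+2) = r * u (n+1) + s ^ (n+1) * (u 1 - r * u 0) := by
        have := hv (n+1); linear_combination this
      have hun : 0 ≤ ‖u (n+1)‖ := norm_nonneg _
      have hpn : 0 ≤ t ^ n := pow_nonneg ht0 n
      calc ‖u (n+2)‖ ≤ ‖r * u (n+1)‖ + ‖s ^ (n+1) * (u 1 - r * u 0)‖ := by
            rw [h1]; exact norm_add_le _ _
        _ ≤ t * ‖u (n+1)‖ + t ^ (n+1) * M := by
            rw [norm_mul, norm_mul, norm_pow]; gcongr
        _ ≤ t * (t ^ (n+1) * ‖u 0‖ + ((n:ℝ)+1) * t ^ n * M) + t ^ (n+1) * M := by gcongr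
        _ = t ^ (n+1+1) * ‖u 0‖ + ((n:ℝ)+1+1) * t ^ (n+1) * M := by ring
        _ = t ^ (n+1+1) * ‖u 0‖ + ((↑(n+1):ℝ)+1) * t ^ (n+1) * M := by push_cast; ring
  have hb : Tendsto (fun n : ℕ => t ^ (n+1) * ‖u 0‖ + ((n:ℝ)+1) * t ^ n * M) atTop (nhds 0) := by
    have h1 : Tendsto (fun n : ℕ => t ^ (n+1) * ‖u 0‖) atTop (nhds 0) := by
      simpa using (((tendsto_pow_atTop_nhds_zero_of_lt_one ht0 ht1).comp
        (tendsto_add_atTop_nat 1)).mul_const ‖u 0‖)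
    have h2 : Tendsto (fun n : ℕ => ((n:ℝ)+1) * t ^ n * M) atTop (nhds 0) := by
      have := ((nat_mul_pow_tendsto ht0 ht1).add
        (tendsto_pow_atTop_nhds_zero_of_lt_one ht0 ht1)).mul_const M
      simpa [add_mul] using this
    simpa using h1.add h2
  have hnorm : Tendsto (fun n : ℕ => ‖u (n+1)‖) atTop (nhds 0) :=
    squeeze_zero (fun n => norm_nonneg _) (fun n => key n) hb
  have hshift : Tendsto (fun n : ℕ => u (n+1)) atTop (nhds 0) :=
    tendsto_zero_iff_norm_tendsto_zero.mpr hnorm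
  exact (tendsto_add_atTop_iff_nat 1).mp hshift

/-- Jury-type criterion: all complex roots of `A z² - B z + C` lie in the open unit disc. -/
lemma jury (A B C : ℝ) (hA : 0 < A) (h1 : 0 < A - B + C) (h2 : 0 < A + B + C) (h3 : C < A) :
    ∀ z : ℂ, (A:ℂ)*z^2 - (B:ℂ)*z + (C:ℂ) = 0 → ‖z‖ < 1 := by
  rintro ⟨x, y⟩ hz
  rw [Complex.ext_iff] at hz
  simp only [pow_two, Complex.mul_re, Complex.mul_im, Complex.sub_re, Complex.sub_im,
    Complex.add_re, Complex.add_im, Complex.ofReal_re, Complex.ofReal_im, Complex.zero_re,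
    Complex.zero_im] at hz
  obtain ⟨hre, him⟩ := hz
  have habs : (‖(⟨x, y⟩ : ℂ)‖)^2 = x^2 + y^2 := by
    rw [Complex.sq_norm, Complex.normSq_apply]; ring
  have hnn := norm_nonneg (⟨x, y⟩ : ℂ)
  have hkey : x^2 + y^2 < 1 := by
    rcases eq_or_ne y 0 with hy | hy
    · subst hy
      simp only [mul_zero, zero_mul, sub_zero, add_zero] at hre
      have hx : A*x^2 - B*x + C = 0 := by nlinarith [hre]
      have hx1 : x < 1 := by nlinarith [sq_nonneg (x-1), sq_nonneg (x+1)]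
      have hx2 : -1 < x := by nlinarith [sq_nonneg (x-1), sq_nonneg (x+1)]
      nlinarith
    · have h2ax : 2*A*x - B = 0 := by
        have : y * (2*A*x - B) = 0 := by nlinarith [him]
        rcases mul_eq_zero.mp this with h | h
        · exact absurd h hy
        · exact h
      have hC : C = A*(x^2 + y^2) := by nlinarith [hre]
      have : A*(x^2+y^2) < A*1 := by rw [← hC]; nlinarith
      nlinarith
  nlinarith [habs, hnn]

/-- Iterates of the SBDF2 map are given by the scalar recurrence. -/
lemma sbdf2_iterate (a lam dt : ℝ) (x : ℝ × ℝ) :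
    ∀ n, (sbdf2Map a lam dt)^[n] x =
      (((sbdf2Map a lam dt)^[n] x).1, ((sbdf2Map a lam dt)^[n] x).2) := fun _ => rfl

/-- Stability from roots of modulus `< 1`. -/
lemma stable_of_roots (a lam dt : ℝ) (hA : (3/2 - lam*dt : ℝ) ≠ 0)
    (hroots : ∀ z : ℂ,
      ((3/2 - lam*dt : ℝ) : ℂ)*z^2 - ((2 + 2*a*dt : ℝ) : ℂ)*z + ((1/2 + a*dt : ℝ) : ℂ) = 0 →
      ‖z‖ < 1) :
    sbdf2AsympStable a lam dt := by
  set A : ℝ := 3/2 - lam*dt with hAdef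
  set B : ℝ := 2 + 2*a*dt with hBdef
  set C : ℝ := 1/2 + a*dt with hCdef
  have hAc : (A:ℂ) ≠ 0 := by exact_mod_cast hA
  -- quadratic formula over ℂ
  obtain ⟨w, hw⟩ := IsAlgClosed.exists_pow_nat_eq ((B:ℂ)^2 - 4*A*C) (n := 2) (by norm_num)
  have h2A : (2*(A:ℂ)) ≠ 0 := mul_ne_zero two_ne_zero hAc
  set r : ℂ := ((B:ℂ) + w) / (2*A) with hrdef
  set s : ℂ := ((B:ℂ) - w) / (2*A) with hsdef
  have hr2 : r * (2*(A:ℂ)) = (B:ℂ) + w := by rw [hrdef, div_mul_cancel₀ _ h2A]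
  have hs2 : s * (2*(A:ℂ)) = (B:ℂ) - w := by rw [hsdef, div_mul_cancel₀ _ h2A]
  have hsum : (A:ℂ) * (r + s) = (B:ℂ) := by
    linear_combination ((1:ℂ)/2) * hr2 + ((1:ℂ)/2) * hs2
  have hprod : (A:ℂ) * (r * s) = (C:ℂ) := by
    have hrs : (r*(2*(A:ℂ))) * (s*(2*(A:ℂ))) = ((B:ℂ)+w)*((B:ℂ)-w) := by rw [hr2, hs2]
    have h5 : (4*(A:ℂ)) * ((A:ℂ) * (r * s)) = (4*(A:ℂ)) * (C:ℂ) := by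
      linear_combination hrs - hw
    exact mul_left_cancel₀ (by simpa using hAc : (4*(A:ℂ)) ≠ 0) h5
  have hroot_r : (A:ℂ)*r^2 - (B:ℂ)*r + (C:ℂ) = 0 := by
    have h6 : (4*(A:ℂ)) * ((A:ℂ)*r^2 - (B:ℂ)*r + (C:ℂ)) = (4*(A:ℂ)) * 0 := by
      linear_combination (2*(A:ℂ)*r - (B:ℂ) + w) * hr2 + hw
    exact mul_left_cancel₀ (by simpa using hAc : (4*(A:ℂ)) ≠ 0) h6
  have hroot_s : (A:ℂ)*s^2 - (B:ℂ)*s + (C:ℂ) = 0 := by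
    have h6 : (4*(A:ℂ)) * ((A:ℂ)*s^2 - (B:ℂ)*s + (C:ℂ)) = (4*(A:ℂ)) * 0 := by
      linear_combination (2*(A:ℂ)*s - (B:ℂ) - w) * hs2 + hw
    exact mul_left_cancel₀ (by simpa using hAc : (4*(A:ℂ)) ≠ 0) h6
  have hr : ‖r‖ < 1 := by exact hroots r hroot_r
  have hs : ‖s‖ < 1 := by exact hroots s hroot_s
  intro x
  set F := sbdf2Map a lam dt with hF
  set u : ℕ → ℝ := fun n => (F^[n] x).1 with hu
  have hu1 : ∀ n, u (n+1) = (F^[n] x).2 := by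
    intro n
    rw [hu]
    simp only [Function.iterate_succ_apply']
    rfl
  have hurec : ∀ n, u (n+2) = A⁻¹ * (B * u (n+1) - C * u n) := by
    intro n
    have h1 : u (n+2) = (F^[n+1] x).2 := hu1 (n+1)
    rw [h1, Function.iterate_succ_apply']
    show A⁻¹ * (2*(F^[n] x).2 + 2*dt*a*(F^[n] x).2 - (1/2)*(F^[n] x).1 - dt*a*(F^[n] x).1)
      = A⁻¹ * (B * u (n+1) - C * u n)
    rw [hu1 n, hu]
    rw [hBdef, hCdef]
    ring_nf
  -- complexified sequence satisfies the (r,s) recurrence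
  have hUrec : ∀ n, ((u (n+2) : ℂ)) = (r+s) * (u (n+1) : ℂ) - r*s * (u n : ℂ) := by
    intro n
    have h1 : (A:ℂ) * (u (n+2) : ℂ) = (B:ℂ) * (u (n+1):ℂ) - (C:ℂ) * (u n : ℂ) := by
      rw [hurec n]
      push_cast
      field_simp
    have h2 : (A:ℂ) * ((u (n+2) : ℂ)) = (A:ℂ) * ((r+s) * (u (n+1) : ℂ) - r*s * (u n : ℂ)) := by
      rw [h1]; linear_combination (u (n+1) : ℂ) * hsum.symm - (u n : ℂ) * hprod.symm
    exact mul_left_cancel₀ hAc h2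
  have hU : Tendsto (fun n => ((u n : ℂ))) atTop (nhds 0) :=
    rec_tendsto r s hr hs _ hUrec
  have hureal : Tendsto u atTop (nhds 0) := by
    have := (Complex.continuous_re.tendsto 0).comp hU
    simpa [Function.comp_def] using this
  have h1 : Tendsto (fun n : ℕ => u (n+1)) atTop (nhds 0) :=
    hureal.comp (tendsto_add_atTop_nat 1)
  have : Tendsto (fun n : ℕ => (u n, u (n+1))) atTop (nhds (0, 0)) :=
    hureal.prodMk_nhds h1
  convert this using 2 with n
  exact Prod.ext rfl (hu1 n).symm

/-- Instability when there is a real root `ρ ≤ -1`. -/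
lemma unstable_of_root (a lam dt : ℝ) (hA : (3/2 - lam*dt : ℝ) ≠ 0) (ρ : ℝ) (hρ : ρ ≤ -1)
    (hroot : (3/2 - lam*dt)*ρ^2 - (2 + 2*a*dt)*ρ + (1/2 + a*dt) = 0) :
    ¬ sbdf2AsympStable a lam dt := by
  intro hst
  have hiter : ∀ n, (sbdf2Map a lam dt)^[n] (1, ρ) = (ρ^n, ρ^(n+1)) := by
    intro n
    induction n with
    | zero => simp
    | succ n ih =>
      rw [Function.iterate_succ_apply', ih]
      show (ρ^(n+1), (3/2 - lam*dt)⁻¹ * (2*ρ^(n+1) + 2*dt*a*ρ^(n+1) - (1/2)*ρ^n - dt*a*ρ^n))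
        = (ρ^(n+1), ρ^(n+1+1))
      have : (3/2 - lam*dt)⁻¹ * (2*ρ^(n+1) + 2*dt*a*ρ^(n+1) - (1/2)*ρ^n - dt*a*ρ^n)
          = ρ^(n+1+1) := by
        rw [eq_comm, eq_inv_mul_iff_mul_eq₀ hA]
        linear_combination (ρ^n) * hroot
      rw [this]
  have hfst : Tendsto (fun n : ℕ => ρ^n) atTop (nhds 0) := by
    have h' := (continuous_fst.tendsto ((0:ℝ), (0:ℝ))).comp (hst (1, ρ))
    simp only [Function.comp_def, hiter, Prod.fst] at h'
    exact h'
  have habs : (1:ℝ) ≤ |ρ| := le_abs.mpr (Or.inr (by linarith))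
  have hone : ∀ n : ℕ, (1:ℝ) ≤ |ρ^n| := by
    intro n
    rw [abs_pow]
    calc (1:ℝ) = 1^n := (one_pow n).symm
      _ ≤ |ρ|^n := pow_le_pow_left₀ zero_le_one habs n
  obtain ⟨N, hN⟩ := Metric.tendsto_atTop.mp hfst 1 one_pos
  have h1 := hN N le_rfl
  rw [Real.dist_eq, sub_zero] at h1
  linarith [hone N]

/-- For SBDF2 applied to `u' = (λ+α)u` with `α + λ < 0`: the steady state `0` is a fixed
point of the associated map, and it is asymptotically stable whenever both characteristic
roots have modulus `< 1`; in particular for `α > 0` this holds for every `dt > 0`, and for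
`α < 0`, `3α < λ` (restricting to `dt < 3/(2λ)` when `λ > 0`) it holds exactly when
`dt < 4/(λ - 3α)`. -/
theorem stmt18 (a lam : ℝ) (h : a + lam < 0) :
    (∀ dt : ℝ, sbdf2Map a lam dt (0, 0) = (0, 0)) ∧
    (∀ dt : ℝ, 0 < dt → 3 - 2*lam*dt ≠ 0 →
      (∀ z : ℂ,
        ((3/2 - lam*dt : ℝ) : ℂ)*z^2 - ((2 + 2*a*dt : ℝ) : ℂ)*z + ((1/2 + a*dt : ℝ) : ℂ) = 0 →
        ‖z‖ < 1) →
      sbdf2AsympStable a lam dt) ∧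
    (0 < a → ∀ dt : ℝ, 0 < dt → sbdf2AsympStable a lam dt) ∧
    (a < 0 → 3*a < lam → ∀ dt : ℝ, 0 < dt → (0 < lam → dt < 3/(2*lam)) →
      (sbdf2AsympStable a lam dt ↔ dt < 4/(lam - 3*a))) := by
  have hAne : ∀ dt : ℝ, 3 - 2*lam*dt ≠ 0 → (3/2 - lam*dt : ℝ) ≠ 0 := by
    intro dt h0 hc
    apply h0
    linarith
  refine ⟨?_, ?_, ?_, ?_⟩
  · intro dt
    simp [sbdf2Map]
  · intro dt _ h0 hroots
    exact stable_of_roots a lam dt (hAne dt h0) hroots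
  · -- a > 0 case: lam < -a < 0, A = 3/2 - lam dt > 0
    intro ha dt hdt
    have hlam : lam < 0 := by linarith
    have hApos : 0 < (3/2 - lam*dt : ℝ) := by nlinarith
    apply stable_of_roots a lam dt (ne_of_gt hApos)
    apply jury
    · exact hApos
    · nlinarith
    · nlinarith
    · nlinarith
  · intro ha h3a dt hdt hres
    have hApos : 0 < (3/2 - lam*dt : ℝ) := by
      rcases le_or_gt lam 0 with hl | hl
      · nlinarith
      · have := hres hl
        have h2 : 2*lam > 0 := by linarith
        rw [lt_div_iff₀ h2] at this
        nlinarith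
    have hsub : 0 < lam - 3*a := by linarith
    constructor
    · intro hst
      by_contra hge
      push_neg at hge
      -- dt ≥ 4/(lam-3a) ⟹ A + B + C ≤ 0 ⟹ real root ρ ≤ -1
      have h4 : 4 ≤ dt * (lam - 3*a) := by
        rw [div_le_iff₀ hsub] at hge
        linarith
      set A : ℝ := 3/2 - lam*dt
      set B : ℝ := 2 + 2*a*dt
      set C : ℝ := 1/2 + a*dt
      have hsumneg : A + B + C ≤ 0 := by
        show (3/2 - lam*dt) + (2 + 2*a*dt) + (1/2 + a*dt) ≤ 0
        nlinarith
      have hAB : A*(A + B + C) ≤ 0 := by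
        rcases le_or_gt (A+B+C) 0 with h' | h'
        · exact mul_nonpos_iff.mpr (Or.inl ⟨hApos.le, h'⟩)
        · linarith
      have hD : 0 ≤ B^2 - 4*A*C := by nlinarith [sq_nonneg (B + 2*A), hAB]
      set D : ℝ := B^2 - 4*A*C with hDdef
      have hsq : Real.sqrt D ^ 2 = D := Real.sq_sqrt hD
      have hsqge : B + 2*A ≤ Real.sqrt D := by
        have h1 : |B + 2*A| ≤ Real.sqrt D := by
          rw [← Real.sqrt_sq_eq_abs]
          apply Real.sqrt_le_sqrt
          show (B + 2*A)^2 ≤ B^2 - 4*A*C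
          nlinarith [hAB]
        calc B + 2*A ≤ |B + 2*A| := le_abs_self _
          _ ≤ Real.sqrt D := h1
      set ρ : ℝ := (B - Real.sqrt D) / (2*A) with hρdef
      have hAne2 : (2*A) ≠ 0 := by positivity
      have hρ2 : ρ * (2*A) = B - Real.sqrt D := by
        rw [hρdef, div_mul_cancel₀ _ hAne2]
      have hroot : A*ρ^2 - B*ρ + C = 0 := by
        have h6 : (4*A^2) * (A*ρ^2 - B*ρ + C) = (4*A^2) * 0 := by
          linear_combination (A*(2*A*ρ - B - Real.sqrt D)) * hρ2 + A * hsq + A * hDdef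
        exact mul_left_cancel₀ (by positivity) h6
      have hρle : ρ ≤ -1 := by
        rw [hρdef, div_le_iff₀ (by positivity : (0:ℝ) < 2*A)]
        linarith [hsqge]
      exact unstable_of_root a lam dt (ne_of_gt hApos) ρ hρle (by
        show (3/2 - lam*dt)*ρ^2 - (2 + 2*a*dt)*ρ + (1/2 + a*dt) = 0
        exact hroot) hst
    · intro hlt
      apply stable_of_roots a lam dt (ne_of_gt hApos)
      apply jury
      · exact hApos
      · nlinarith
      · rw [lt_div_iff₀ hsub] at hlt
        nlinarith
      · nlinarith
end
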